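/- Let ω ∈ ℤ₂ be the root of x² - x + 2 = 0 with v₂(ω) = 1. Then for every integer n ≥ 1, v₂((1 - ω)^(2n) - 1) = 3 + v₂(n). -/

import Mathlib

lemma two_not_unit : ¬ IsUnit (2 : ℤ_[2]) := by
  rw [PadicInt.not_isUnit_iff]
  have : ‖((2:ℕ) : ℤ_[2])‖ = ((2:ℕ) : ℝ)⁻¹ := PadicInt.norm_p
  simp only [Nat.cast_ofNat] at this
  rw [this]; norm_num

lemma unit_of_not_dvd {z : ℤ_[2]} (h : ¬ (2:ℤ_[2]) ∣ z) : IsUnit z := by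
  rw [PadicInt.isUnit_iff]
  refine le_antisymm (PadicInt.norm_le_one z) ?_
  by_contra hlt
  push_neg at hlt
  have := (PadicInt.norm_lt_one_iff_dvd z).mp hlt
  simp only [Nat.cast_ofNat] at this
  exact h this

lemma unit_one_add_two_mul (a : ℤ_[2]) : IsUnit (1 + 2*a) := by
  apply unit_of_not_dvd
  rintro ⟨k, hk⟩
  exact two_not_unit (isUnit_of_dvd_one ⟨k - a, by linear_combination hk⟩)

lemma val_unit_eq_zero {z : ℤ_[2]} (h : IsUnit z) : z.valuation = 0 := by
  have hz : z ≠ 0 := h.ne_zero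
  have h1 := PadicInt.norm_eq_zpow_neg_valuation hz
  rw [PadicInt.isUnit_iff.mp h] at h1
  have h2 : ((2:ℕ) : ℝ) ^ (-(z.valuation:ℤ)) = ((2:ℕ):ℝ) ^ (0:ℤ) := by
    rw [← h1]; norm_num
  have := (zpow_right_inj₀ (by norm_num : (0:ℝ) < ((2:ℕ):ℝ)) (by norm_num)).mp h2
  omega

lemma val_two_pow_mul (k : ℕ) {d : ℤ_[2]} (hd : IsUnit d) :
    ((2:ℤ_[2])^k * d).valuation = k := by
  have h := PadicInt.valuation_p_pow_mul (p := 2) k d hd.ne_zero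
  simp only [Nat.cast_ofNat] at h
  rw [h, val_unit_eq_zero hd, add_zero]

lemma binom (s : ℤ_[2]) : ∀ n : ℕ, ∃ c : ℤ_[2],
    (1 - 8*s)^n = 1 + 8*c ∧ (2:ℤ_[2]) ∣ (c + n*s) := by
  intro n
  induction n with
  | zero => exact ⟨0, by ring, by simp⟩
  | succ n ih =>
    obtain ⟨c, hc, hd⟩ := ih
    refine ⟨c - s - 8*c*s, by rw [pow_succ, hc]; ring, ?_⟩
    obtain ⟨k, hk⟩ := hd
    exact ⟨k - 4*c*s, by push_cast; linear_combination hk⟩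

lemma unit_nat_odd (m : ℕ) (hm : ¬ 2 ∣ m) : IsUnit ((m:ℤ_[2])) := by
  obtain ⟨j, hj⟩ := Nat.odd_iff.mpr (Nat.two_dvd_ne_zero.mp hm)
  have : ((m:ℤ_[2])) = 1 + 2*(j:ℤ_[2]) := by rw [hj]; push_cast; ring
  rw [this]; exact unit_one_add_two_mul _

lemma keyD {s : ℤ_[2]} (hs : IsUnit s) : ∀ k : ℕ, ∀ m : ℕ, ¬ 2 ∣ m →
    ∃ d : ℤ_[2], IsUnit d ∧ (1 - 8*s)^(2^k * m) - 1 = 2^(3+k) * d := by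
  intro k
  induction k with
  | zero =>
    intro m hm
    obtain ⟨c, hc, hd⟩ := binom s m
    refine ⟨c, ?_, by simpa using by rw [hc]; ring⟩
    apply unit_of_not_dvd
    intro h2c
    obtain ⟨k, hk⟩ := hd
    have hms : IsUnit ((m:ℤ_[2]) * s) := (unit_nat_odd m hm).mul hs
    have : (2:ℤ_[2]) ∣ (m:ℤ_[2]) * s := by
      obtain ⟨e, he⟩ := h2c
      exact ⟨k - e, by linear_combination hk - he⟩
    exact two_not_unit (isUnit_of_mul_isUnit_left (this.choose_spec ▸ hms))
  | succ k ih =>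
    intro m hm
    obtain ⟨d, hdu, hd⟩ := ih m hm
    set y := (1 - 8*s)^(2^k * m) with hy
    have hsq : (1 - 8*s)^(2^(k+1) * m) = y^2 := by
      rw [hy, ← pow_mul]; ring_nf
    have key : (1 - 8*s)^(2^(k+1) * m) - 1 = 2^(3+(k+1)) * (d * (1 + 2^(2+k)*d)) := by
      rw [hsq]
      have hy1 : y = 1 + 2^(3+k)*d := by linear_combination hd
      rw [hy1]; ring
    refine ⟨d * (1 + 2^(2+k)*d), hdu.mul ?_, key⟩
    have : (1 : ℤ_[2]) + 2^(2+k)*d = 1 + 2*(2^(1+k)*d) := by ring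
    rw [this]; exact unit_one_add_two_mul _

lemma keyC {s : ℤ_[2]} (hs : IsUnit s) (n : ℕ) (hn : 1 ≤ n) :
    ((1 - 8*s)^n - 1).valuation = 3 + (n : ℤ_[2]).valuation := by
  have hn0 : n ≠ 0 := by omega
  set k := n.factorization 2 with hk
  set m := n / 2^k with hm
  have hmul : 2^k * m = n := Nat.ordProj_mul_ordCompl_eq_self n 2
  have hmodd : ¬ 2 ∣ m := Nat.not_dvd_ordCompl Nat.prime_two hn0
  obtain ⟨d, hdu, hd⟩ := keyD hs k m hmodd
  rw [hmul] at hd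
  rw [hd, val_two_pow_mul _ hdu]
  have : ((n:ℤ_[2])) = 2^k * (m:ℤ_[2]) := by rw [← hmul]; push_cast; ring
  rw [this, val_two_pow_mul _ (unit_nat_odd m hmodd)]

/-- If `ω ∈ ℤ₂` is the root of `x² - x + 2` with `v₂(ω) = 1`, then for every `n ≥ 1`,
`v₂((1 - ω)^(2n) - 1) = 3 + v₂(n)`. -/
theorem val_pow_sub_one (ω : ℤ_[2]) (hroot : ω ^ 2 - ω + 2 = 0) (hval : ω.valuation = 1)
    (n : ℕ) (hn : 1 ≤ n) :
    ((1 - ω) ^ (2 * n) - 1).valuation = 3 + (n : ℤ_[2]).valuation := by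
  have h2ω : (2:ℤ_[2]) ∣ ω := by
    by_contra h
    have := val_unit_eq_zero (unit_of_not_dvd h)
    rw [hval] at this; exact one_ne_zero this
  obtain ⟨t, ht⟩ := h2ω
  have h20 : (2:ℤ_[2]) ≠ 0 := two_ne_zero
  have h2 : (2:ℤ_[2]) * (2*t^2 - t + 1) = 0 := by
    rw [ht] at hroot; linear_combination hroot
  have hzero : 2*t^2 - t + 1 = 0 := (mul_eq_zero.mp h2).resolve_left h20
  set s : ℤ_[2] := 1 + 2*t^2 + 2*t^4 with hs
  have hsu : IsUnit s := by
    have : s = 1 + 2*(t^2 + t^4) := by rw [hs]; ring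
    rw [this]; exact unit_one_add_two_mul _
  have hbase : (1 - ω)^2 = 1 - 8*s := by
    rw [ht, hs]
    linear_combination (8*t^2 + 4*t + 8) * hzero
  have hsq : (1 - ω)^(2*n) = (1 - 8*s)^n := by
    rw [pow_mul, hbase]
  rw [hsq]
  exact keyC hsu n hn
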